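/- arXiv:2104.09931 — 2 statements merged into one kernel-verified Lean document; each statement's English description precedes it below -/
import Mathlib

section
/- Let ν be a finite nonnegative Radon measure on ℝ^d supported in a compact set K, and let r > 0 be arbitrary. For parameters δ > 0 and k ∈ ℕ, define β_{k,δ} := 2^d (2^k+1)^d ν(K) / δ and E_{r,k,δ} := {x ∈ ℝ^d : ν(B(x, 2^k r)) ≥ β_{k,δ} · ν(B(x, r))}. Then ν(E_{r,k,δ}) ≤ δ. -/
open MeasureTheory Metric Filter

section Aux

variable {d : ℕ}

private lemma fubini_ball_aux (ν : Measure (EuclideanSpace ℝ (Fin d))) [IsFiniteMeasure ν]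
    {A : Set (EuclideanSpace ℝ (Fin d))} (hA : MeasurableSet A) (s : ℝ) :
    ∫⁻ x, ν (A ∩ ball x s) = ν A * volume (ball (0 : EuclideanSpace ℝ (Fin d)) s) := by
  set S : Set (EuclideanSpace ℝ (Fin d) × EuclideanSpace ℝ (Fin d)) :=
    {p | p.2 ∈ A ∧ dist p.1 p.2 < s} with hS
  have hSm : MeasurableSet S := by
    apply MeasurableSet.inter
    · exact measurable_snd hA
    · exact (isOpen_lt (continuous_fst.dist continuous_snd) continuous_const).measurableSet
  have h1 : ∀ x, Prod.mk x ⁻¹' S = A ∩ ball x s := by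
    intro x
    ext y
    simp [hS, Set.mem_setOf_eq, mem_ball, dist_comm, and_comm]
  have hswap := lintegral_lintegral_swap (μ := (volume : Measure (EuclideanSpace ℝ (Fin d))))
      (ν := ν) (f := fun x y => S.indicator 1 (x, y)) ?_
  · calc ∫⁻ x, ν (A ∩ ball x s)
        = ∫⁻ x, ∫⁻ y, S.indicator 1 (x, y) ∂ν := by
          refine lintegral_congr fun x => ?_
          have h : (fun y => S.indicator (1 : EuclideanSpace ℝ (Fin d) × EuclideanSpace ℝ (Fin d) → ENNReal) (x, y))
              = (Prod.mk x ⁻¹' S).indicator 1 := by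
            ext y; by_cases hy : (x, y) ∈ S <;>
              simp [Set.indicator_apply, hy, Set.mem_preimage]
          rw [h, lintegral_indicator_one (measurable_prodMk_left hSm), h1]
      _ = ∫⁻ y, ∫⁻ x, S.indicator 1 (x, y) ∂volume ∂ν := hswap
      _ = ∫⁻ y, A.indicator (fun z => volume (ball z s)) y ∂ν := by
          refine lintegral_congr fun y => ?_
          have h : (fun x => S.indicator (1 : EuclideanSpace ℝ (Fin d) × EuclideanSpace ℝ (Fin d) → ENNReal) (x, y))
              = ((fun x => (x, y)) ⁻¹' S).indicator 1 := by
            ext x; by_cases hx : (x, y) ∈ S <;>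
              simp [Set.indicator_apply, hx, Set.mem_preimage]
          rw [h, lintegral_indicator_one (measurable_prodMk_right hSm)]
          by_cases hy : y ∈ A
          · have h2 : (fun x => (x, y)) ⁻¹' S = ball y s := by
              ext x; simp [hS, hy, mem_ball, dist_comm]
            rw [h2, Set.indicator_of_mem hy]
          · have h2 : (fun x => (x, y)) ⁻¹' S = ∅ := by
              ext x; simp [hS, hy]
            rw [h2, Set.indicator_of_notMem hy, measure_empty]
      _ = ∫⁻ y, A.indicator (fun _ => volume (ball (0 : EuclideanSpace ℝ (Fin d)) s)) y ∂ν := by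
          refine lintegral_congr fun y => ?_
          by_cases hy : y ∈ A
          · simp [hy, Measure.addHaar_ball_center]
          · simp [hy]
      _ = ν A * volume (ball (0 : EuclideanSpace ℝ (Fin d)) s) := by
          rw [lintegral_indicator_const hA, mul_comm]
  · exact ((measurable_one.indicator hSm).comp measurable_id).aemeasurable

end Aux

/-- The key estimate in the proof of the temperance property of tangent measures (following
Preiss): for a finite measure `ν` supported in a compact `K`, the set of points where
`ν(B(x, 2^k r)) ≥ β_{k,δ} ν(B(x,r))`, with `β_{k,δ} = 2^d (2^k+1)^d ν(K)/δ`, has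
`ν`-measure at most `δ`. -/
theorem measure_of_doubling_exceptional_set_le
    (d : ℕ) (ν : Measure (EuclideanSpace ℝ (Fin d))) [IsFiniteMeasure ν]
    (K : Set (EuclideanSpace ℝ (Fin d))) (hK : IsCompact K) (hsupp : ν Kᶜ = 0)
    (r δ : ℝ) (hr : 0 < r) (hδ : 0 < δ) (k : ℕ) :
    ν {x | (2:ℝ) ^ d * ((2:ℝ) ^ k + 1) ^ d * (ν K).toReal / δ * (ν (ball x r)).toReal
        ≤ (ν (ball x ((2:ℝ) ^ k * r))).toReal} ≤ ENNReal.ofReal δ := by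
  classical
  set β : ℝ := (2:ℝ) ^ d * ((2:ℝ) ^ k + 1) ^ d * (ν K).toReal / δ with hβdef
  set E : Set (EuclideanSpace ℝ (Fin d)) :=
    {x | β * (ν (ball x r)).toReal ≤ (ν (ball x ((2:ℝ) ^ k * r))).toReal} with hEdef
  have hmeasb : ∀ t : ℝ, Measurable fun x : EuclideanSpace ℝ (Fin d) => ν (ball x t) := by
    intro t
    have h := measurable_measure_prodMk_left (ν := ν)
      (s := {p : EuclideanSpace ℝ (Fin d) × EuclideanSpace ℝ (Fin d) | dist p.2 p.1 < t})
      ((isOpen_lt (continuous_snd.dist continuous_fst) continuous_const).measurableSet)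
    convert h using 2 with x
    rfl
  have hE : MeasurableSet E :=
    measurableSet_le (measurable_const.mul (hmeasb r).ennreal_toReal)
      (hmeasb _).ennreal_toReal
  have huniv : ν Set.univ = ν K := by
    refine le_antisymm ?_ (measure_mono (Set.subset_univ _))
    calc ν Set.univ = ν (K ∪ Kᶜ) := by rw [Set.union_compl_self]
      _ ≤ ν K + ν Kᶜ := measure_union_le _ _
      _ = ν K := by rw [hsupp, add_zero]
  by_cases hK0 : ν K = 0
  · calc ν E ≤ ν Set.univ := measure_mono (Set.subset_univ _)
      _ = 0 := by rw [huniv, hK0]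
      _ ≤ ENNReal.ofReal δ := zero_le
  have hm : 0 < (ν K).toReal := ENNReal.toReal_pos hK0 (measure_ne_top _ _)
  rcases Nat.eq_zero_or_pos d with hd | hd
  · -- dimension zero: the space is a single point
    subst hd
    haveI : Subsingleton (EuclideanSpace ℝ (Fin 0)) :=
      ⟨fun a b => by ext i; exact i.elim0⟩
    rcases E.eq_empty_or_nonempty with hne | ⟨z, hz⟩
    · rw [hne]; simp
    · have hzE : β * (ν (ball z r)).toReal ≤ (ν (ball z ((2:ℝ) ^ k * r))).toReal := hz
      have hball : ∀ (x : EuclideanSpace ℝ (Fin 0)) (t : ℝ), 0 < t → ball x t = Set.univ := by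
        intro x t ht
        ext y
        simp [mem_ball, Subsingleton.elim y x, ht]
      rw [hball z r hr, hball z _ (by positivity), huniv] at hzE
      rw [hβdef] at hzE
      simp only [pow_zero, one_mul] at hzE
      -- hzE : (ν K).toReal / δ * (ν K).toReal ≤ (ν K).toReal
      have hmδ : (ν K).toReal ≤ δ := by
        have h1 : (ν K).toReal / δ ≤ 1 := by
          by_contra h
          push_neg at h
          nlinarith
        calc (ν K).toReal = (ν K).toReal / δ * δ := by field_simp
          _ ≤ 1 * δ := by nlinarith [div_nonneg hm.le hδ.le]
          _ = δ := one_mul δ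
      calc ν E ≤ ν Set.univ := measure_mono (Set.subset_univ _)
        _ = ν K := huniv
        _ = ENNReal.ofReal (ν K).toReal := (ENNReal.ofReal_toReal (measure_ne_top _ _)).symm
        _ ≤ ENNReal.ofReal δ := ENNReal.ofReal_le_ofReal hmδ
  · haveI : Nonempty (Fin d) := ⟨⟨0, hd⟩⟩
    set s : ℝ := r / 2 with hsdef
    set R : ℝ := (2:ℝ) ^ k * r + r / 2 with hRdef
    have hs0 : 0 < s := by positivity
    have hR0 : 0 < R := by positivity
    set c : ENNReal := ENNReal.ofReal β with hcdef
    have hβpos : 0 < β := by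
      apply div_pos _ hδ
      have h2 : (0:ℝ) < (2:ℝ) ^ k + 1 := by positivity
      positivity
    have key : ∀ x, c * ν (E ∩ ball x s) ≤ ν (ball x R) := by
      intro x
      rcases (E ∩ ball x s).eq_empty_or_nonempty with h | ⟨z, hzE, hzx⟩
      · rw [h]; simp
      · have hsub1 : E ∩ ball x s ⊆ ball z r := by
          intro w hw
          have h1 : dist w x < s := hw.2
          have h2 : dist z x < s := hzx
          have := dist_triangle w x z
          rw [mem_ball]
          rw [dist_comm z x] at h2
          calc dist w z ≤ dist w x + dist x z := dist_triangle w x z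
            _ < s + s := by linarith
            _ = r := by rw [hsdef]; ring
        have hsub2 : ball z ((2:ℝ) ^ k * r) ⊆ ball x R := by
          intro w hw
          rw [mem_ball] at hw ⊢
          have h2 : dist z x < s := hzx
          calc dist w x ≤ dist w z + dist z x := dist_triangle w z x
            _ < (2:ℝ) ^ k * r + s := by linarith
            _ = R := by rw [hRdef, hsdef]
        have hz : β * (ν (ball z r)).toReal ≤ (ν (ball z ((2:ℝ) ^ k * r))).toReal := hzE
        calc c * ν (E ∩ ball x s) ≤ c * ν (ball z r) :=
              mul_le_mul_right (measure_mono hsub1) _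
          _ ≤ ν (ball z ((2:ℝ) ^ k * r)) := by
              conv_lhs => rw [show ν (ball z r) = ENNReal.ofReal (ν (ball z r)).toReal from
                (ENNReal.ofReal_toReal (measure_ne_top _ _)).symm]
              rw [hcdef, ← ENNReal.ofReal_mul hβpos.le,
                show ν (ball z ((2:ℝ) ^ k * r))
                  = ENNReal.ofReal (ν (ball z ((2:ℝ) ^ k * r))).toReal from
                (ENNReal.ofReal_toReal (measure_ne_top _ _)).symm]
              exact ENNReal.ofReal_le_ofReal hz
          _ ≤ ν (ball x R) := measure_mono hsub2
    have int1 := fubini_ball_aux ν hE s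
    have int2 := fubini_ball_aux ν MeasurableSet.univ R
    simp only [Set.univ_inter] at int2
    set Vs := volume (ball (0 : EuclideanSpace ℝ (Fin d)) s) with hVs
    set VR := volume (ball (0 : EuclideanSpace ℝ (Fin d)) R) with hVR
    have hle1 : c * (ν E * Vs) ≤ ν K * VR := by
      calc c * (ν E * Vs) = c * ∫⁻ x, ν (E ∩ ball x s) := by rw [int1]
        _ = ∫⁻ x, c * ν (E ∩ ball x s) := (lintegral_const_mul' _ _ ENNReal.ofReal_ne_top).symm
        _ ≤ ∫⁻ x, ν (ball x R) := lintegral_mono key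
        _ = ν Set.univ * VR := int2
        _ = ν K * VR := by rw [huniv]
    have hvol : ∀ t : ℝ, 0 ≤ t → volume (ball (0 : EuclideanSpace ℝ (Fin d)) t)
        = ENNReal.ofReal (t ^ d) *
          ENNReal.ofReal (Real.sqrt Real.pi ^ d / Real.Gamma (d / 2 + 1)) := by
      intro t ht
      rw [EuclideanSpace.volume_ball, Fintype.card_fin, ENNReal.ofReal_pow ht]
    set C := ENNReal.ofReal (Real.sqrt Real.pi ^ d / Real.Gamma (d / 2 + 1)) with hC
    have hle2 : ν K * VR ≤ c * (ENNReal.ofReal δ * Vs) := by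
      rw [hVs, hVR, hvol R hR0.le, hvol s hs0.le]
      have hmain : ν K * ENNReal.ofReal (R ^ d)
          ≤ c * ENNReal.ofReal δ * ENNReal.ofReal (s ^ d) := by
        rw [show ν K = ENNReal.ofReal (ν K).toReal from
            (ENNReal.ofReal_toReal (measure_ne_top _ _)).symm,
          hcdef, ← ENNReal.ofReal_mul (by positivity), ← ENNReal.ofReal_mul hβpos.le,
          ← ENNReal.ofReal_mul (by positivity)]
        apply ENNReal.ofReal_le_ofReal
        have hβδ : β * δ = (2:ℝ) ^ d * ((2:ℝ) ^ k + 1) ^ d * (ν K).toReal := by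
          rw [hβdef]; field_simp
        rw [hβδ]
        have hRle : R ≤ ((2:ℝ) ^ k + 1) * r := by
          rw [hRdef]; nlinarith
        have hpow : R ^ d ≤ (2:ℝ) ^ d * ((2:ℝ) ^ k + 1) ^ d * s ^ d := by
          have h1 : (2:ℝ) ^ d * ((2:ℝ) ^ k + 1) ^ d * s ^ d
              = (2 * ((2:ℝ) ^ k + 1) * s) ^ d := by rw [mul_pow, mul_pow]
          rw [h1]
          apply pow_le_pow_left₀ hR0.le
          rw [hsdef]; nlinarith
        calc (ν K).toReal * R ^ d
            ≤ (ν K).toReal * ((2:ℝ) ^ d * ((2:ℝ) ^ k + 1) ^ d * s ^ d) := by nlinarith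
          _ = (2:ℝ) ^ d * ((2:ℝ) ^ k + 1) ^ d * (ν K).toReal * s ^ d := by ring
      calc ν K * (ENNReal.ofReal (R ^ d) * C) = ν K * ENNReal.ofReal (R ^ d) * C := by
            rw [mul_assoc]
        _ ≤ c * ENNReal.ofReal δ * ENNReal.ofReal (s ^ d) * C := mul_le_mul_left hmain C
        _ = c * (ENNReal.ofReal δ * (ENNReal.ofReal (s ^ d) * C)) := by ring
    have h3 : c * (ν E * Vs) ≤ c * (ENNReal.ofReal δ * Vs) := hle1.trans hle2
    have hc0 : c ≠ 0 := (ENNReal.ofReal_pos.mpr hβpos).ne'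
    have h4 : ν E * Vs ≤ ENNReal.ofReal δ * Vs :=
      (ENNReal.mul_le_mul_iff_right hc0 ENNReal.ofReal_ne_top).mp h3
    have hVs0 : Vs ≠ 0 := (measure_ball_pos volume 0 hs0).ne'
    have hVst : Vs ≠ ⊤ := measure_ball_lt_top.ne
    exact (ENNReal.mul_le_mul_iff_left hVs0 hVst).mp h4
end

section
/- Let ν be a finite nonnegative Radon measure on ℝ^d with compact support, let (r_j) be a sequence of positive reals tending to 0, and let η > 0. Then for ν-almost every x₀ there exist a subsequence (r_{j_k}) and constants C, c > 0 such that for all k and all R > 1: ν(B(x₀, R r_{j_k})) / ν(B(x₀, r_{j_k})) ≤ C R^{d+η} and ν(B(x₀, R^{-1} r_{j_k})) / ν(B(x₀, r_{j_k})) ≥ c R^{-(d+η)}. -/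
open MeasureTheory Metric Filter
open Set

namespace TempAux

lemma nontrivial_E {d : ℕ} (hd : 0 < d) : Nontrivial (EuclideanSpace ℝ (Fin d)) := by
  refine ⟨⟨EuclideanSpace.single ⟨0, hd⟩ (1:ℝ), 0, ?_⟩⟩
  intro h
  have := congrArg (fun v => v ⟨0, hd⟩) h
  simp [EuclideanSpace.single_apply] at this

/-- Volume counting: a `δ`-separated finite set inside `ball z ρ'` has few points. -/
lemma card_le_of_separated {d : ℕ} (hd : 0 < d) {δ ρ' : ℝ} (hδ : 0 < δ) (hρ' : 0 < ρ')
    (z : EuclideanSpace ℝ (Fin d)) (F : Finset (EuclideanSpace ℝ (Fin d)))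
    (hF : ∀ y ∈ F, y ∈ ball z ρ')
    (hsep : ∀ y ∈ F, ∀ w ∈ F, y ≠ w → δ ≤ dist y w) :
    (F.card : ℝ) ≤ (2 * ρ' / δ + 1) ^ d := by
  haveI := nontrivial_E hd
  set v := volume (ball (0 : EuclideanSpace ℝ (Fin d)) 1) with hv
  have hv0 : v ≠ 0 := (measure_ball_pos _ _ one_pos).ne'
  have hvt : v ≠ ⊤ := measure_ball_lt_top.ne
  have hdisj : (F : Set (EuclideanSpace ℝ (Fin d))).PairwiseDisjoint
      (fun y => ball y (δ/2)) := by
    intro y hy w hw hyw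
    exact ball_disjoint_ball (by linarith [hsep y hy w hw hyw])
  have hsub : (⋃ y ∈ F, ball y (δ/2)) ⊆ ball z (ρ' + δ/2) := by
    intro p hp
    simp only [mem_iUnion] at hp
    obtain ⟨y, hy, hp⟩ := hp
    have h1 := mem_ball.1 (hF y hy)
    have h2 := mem_ball.1 hp
    have := dist_triangle p y z
    exact mem_ball.2 (by linarith)
  have h1 : ∑ y ∈ F, volume (ball y (δ/2)) ≤ volume (ball z (ρ' + δ/2)) := by
    rw [← measure_biUnion_finset hdisj (fun _ _ => measurableSet_ball)]
    exact measure_mono hsub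
  have hball : ∀ y : EuclideanSpace ℝ (Fin d),
      volume (ball y (δ/2)) = ENNReal.ofReal ((δ/2)^d) * v := by
    intro y
    rw [Measure.addHaar_ball volume y (by positivity : (0:ℝ) ≤ δ/2), finrank_euclideanSpace_fin]
  have h2 : (F.card : ENNReal) * (ENNReal.ofReal ((δ/2)^d) * v)
      ≤ ENNReal.ofReal ((ρ' + δ/2)^d) * v := by
    calc (F.card : ENNReal) * (ENNReal.ofReal ((δ/2)^d) * v)
        = ∑ y ∈ F, volume (ball y (δ/2)) := by
          simp [hball, Finset.sum_const, nsmul_eq_mul]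
      _ ≤ volume (ball z (ρ' + δ/2)) := h1
      _ = ENNReal.ofReal ((ρ' + δ/2)^d) * v := by
          rw [Measure.addHaar_ball volume z (by positivity : (0:ℝ) ≤ ρ' + δ/2),
            finrank_euclideanSpace_fin]
  rw [← mul_assoc] at h2
  have h3 : (F.card : ENNReal) * ENNReal.ofReal ((δ/2)^d) ≤ ENNReal.ofReal ((ρ' + δ/2)^d) :=
    (ENNReal.mul_le_mul_iff_left hv0 hvt).1 h2
  have h4 : ENNReal.ofReal ((F.card : ℝ) * (δ/2)^d) ≤ ENNReal.ofReal ((ρ' + δ/2)^d) := by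
    rwa [ENNReal.ofReal_mul (by positivity), ENNReal.ofReal_natCast]
  have h5 : (F.card : ℝ) * (δ/2)^d ≤ (ρ' + δ/2)^d :=
    (ENNReal.ofReal_le_ofReal_iff (by positivity)).1 h4
  have hpow : (0:ℝ) < (δ/2)^d := by positivity
  rw [← le_div_iff₀ hpow] at h5
  have heq : (ρ' + δ/2)/(δ/2) = 2 * ρ' / δ + 1 := by field_simp
  calc (F.card : ℝ) ≤ (ρ' + δ/2)^d / (δ/2)^d := h5
    _ = (2 * ρ' / δ + 1) ^ d := by rw [← heq, div_pow (ρ' + δ/2) (δ/2) d]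

lemma finite_of_separated {d : ℕ} (hd : 0 < d) {δ ρ' : ℝ} (hδ : 0 < δ) (hρ' : 0 < ρ')
    (z : EuclideanSpace ℝ (Fin d)) {Y : Set (EuclideanSpace ℝ (Fin d))}
    (hY : Y ⊆ ball z ρ') (hsep : ∀ y ∈ Y, ∀ w ∈ Y, y ≠ w → δ ≤ dist y w) : Y.Finite := by
  by_contra h
  obtain ⟨n, hn⟩ := exists_nat_gt ((2 * ρ' / δ + 1) ^ d)
  obtain ⟨F, hFY, hcard⟩ := Set.Infinite.exists_subset_card_eq (h : Y.Infinite) n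
  have := card_le_of_separated hd hδ hρ' z F (fun y hy => hY (hFY hy))
    (fun y hy w hw hyw => hsep y (hFY hy) w (hFY hw) hyw)
  rw [hcard] at this
  linarith

lemma exists_net {X : Type*} [MetricSpace X] {δ : ℝ} (hδ : 0 < δ) (S : Set X) :
    ∃ Y ⊆ S, (∀ y ∈ Y, ∀ w ∈ Y, y ≠ w → δ ≤ dist y w) ∧ ∀ x ∈ S, ∃ y ∈ Y, dist x y < δ := by
  have hub : ∀ c ⊆ {Y : Set X | Y ⊆ S ∧ ∀ y ∈ Y, ∀ w ∈ Y, y ≠ w → δ ≤ dist y w},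
      IsChain (· ⊆ ·) c → ∃ ub ∈ {Y : Set X | Y ⊆ S ∧ ∀ y ∈ Y, ∀ w ∈ Y, y ≠ w → δ ≤ dist y w},
        ∀ s ∈ c, s ⊆ ub := by
    intro c hc hchain
    rcases c.eq_empty_or_nonempty with rfl | hne
    · exact ⟨∅, ⟨empty_subset _, fun y hy => (notMem_empty y hy).elim⟩,
        fun s hs => (notMem_empty s hs).elim⟩
    · refine ⟨⋃₀ c, ⟨sUnion_subset fun s hs => (hc hs).1, ?_⟩,
        fun s hs => subset_sUnion_of_mem hs⟩
      intro y hy w hw hyw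
      obtain ⟨a, hac, hya⟩ := hy
      obtain ⟨b, hbc, hwb⟩ := hw
      rcases hchain.total hac hbc with hab | hba
      · exact (hc hbc).2 y (hab hya) w hwb hyw
      · exact (hc hac).2 y hya w (hba hwb) hyw
  obtain ⟨Y, hY⟩ := zorn_subset
      {Y : Set X | Y ⊆ S ∧ ∀ y ∈ Y, ∀ w ∈ Y, y ≠ w → δ ≤ dist y w} hub
  · refine ⟨Y, hY.prop.1, hY.prop.2, ?_⟩
    intro x hx
    by_contra h
    push_neg at h
    have hxY : x ∉ Y := by
      intro hxY
      have := h x hxY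
      rw [dist_self] at this
      linarith
    have hins : insert x Y ∈ {Y : Set X | Y ⊆ S ∧ ∀ y ∈ Y, ∀ w ∈ Y, y ≠ w → δ ≤ dist y w} := by
      refine ⟨insert_subset hx hY.prop.1, ?_⟩
      intro y hy w hw hyw
      rcases hy with rfl | hy
      · rcases hw with rfl | hw
        · exact absurd rfl hyw
        · exact h w hw
      · rcases hw with rfl | hw
        · rw [dist_comm]; exact h y hy
        · exact hY.prop.2 y hy w hw hyw
    have := hY.2 hins (subset_insert x Y)
    exact hxY (this (mem_insert x Y))

/-- Bounded multiplicity: sum of measures of `ρ`-balls centered at a `δ`-separated finite set. -/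
lemma sum_ball_le {d : ℕ} (hd : 0 < d) (ν : Measure (EuclideanSpace ℝ (Fin d)))
    [IsFiniteMeasure ν] {δ ρ : ℝ} (hδ : 0 < δ) (hρ : 0 < ρ)
    (F : Finset (EuclideanSpace ℝ (Fin d)))
    (hsep : ∀ y ∈ F, ∀ w ∈ F, y ≠ w → δ ≤ dist y w) :
    ∑ y ∈ F, (ν (ball y ρ)).toReal ≤ (2 * ρ / δ + 1)^d * (ν univ).toReal := by
  classical
  have key : ∑ y ∈ F, ν (ball y ρ) ≤ ENNReal.ofReal ((2 * ρ / δ + 1)^d) * ν univ := by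
    have hrw : ∀ y ∈ F, ν (ball y ρ) = ∫⁻ z, (ball y ρ).indicator 1 z ∂ν :=
      fun y _ => (lintegral_indicator_one measurableSet_ball).symm
    calc ∑ y ∈ F, ν (ball y ρ)
        = ∫⁻ z, ∑ y ∈ F, (ball y ρ).indicator 1 z ∂ν := by
          rw [lintegral_finset_sum]
          · exact Finset.sum_congr rfl hrw
          · exact fun y _ => measurable_one.indicator measurableSet_ball
      _ ≤ ∫⁻ _, ENNReal.ofReal ((2 * ρ / δ + 1)^d) ∂ν := by
          apply lintegral_mono
          intro z
          dsimp only
          have hcount : ∑ y ∈ F, (ball y ρ).indicator (1 : EuclideanSpace ℝ (Fin d) → ENNReal) z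
              = ((F.filter (fun y => z ∈ ball y ρ)).card : ENNReal) := by
            rw [← Finset.sum_boole]
            apply Finset.sum_congr rfl
            intro y _
            by_cases hzy : z ∈ ball y ρ <;> simp [Set.indicator_apply, hzy]
          rw [hcount]
          have hcard : ((F.filter (fun y => z ∈ ball y ρ)).card : ℝ) ≤ (2 * ρ / δ + 1)^d := by
            apply card_le_of_separated hd hδ hρ z
            · intro y hy
              have := (Finset.mem_filter.1 hy).2
              rw [mem_ball] at this ⊢
              rwa [dist_comm]
            · intro y hy w hw hyw
              exact hsep y (Finset.mem_filter.1 hy).1 w (Finset.mem_filter.1 hw).1 hyw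
          calc ((F.filter (fun y => z ∈ ball y ρ)).card : ENNReal)
              = ENNReal.ofReal ((F.filter (fun y => z ∈ ball y ρ)).card : ℝ) := by
                rw [ENNReal.ofReal_natCast]
            _ ≤ ENNReal.ofReal ((2 * ρ / δ + 1)^d) := ENNReal.ofReal_le_ofReal hcard
      _ = ENNReal.ofReal ((2 * ρ / δ + 1)^d) * ν univ := lintegral_const _
  have h1 : (∑ y ∈ F, ν (ball y ρ)).toReal ≤ (ENNReal.ofReal ((2 * ρ / δ + 1)^d) * ν univ).toReal := by
    apply (ENNReal.toReal_le_toReal _ _).2 key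
    · exact ENNReal.sum_ne_top.mpr fun y _ => measure_ne_top ν _
    · exact ENNReal.mul_ne_top ENNReal.ofReal_ne_top (measure_ne_top ν univ)
  rw [ENNReal.toReal_sum (fun y _ => measure_ne_top ν _)] at h1
  rwa [ENNReal.toReal_mul, ENNReal.toReal_ofReal (by positivity)] at h1

/-- One-level covering estimate. -/
lemma one_level {d : ℕ} (hd : 0 < d) (ν : Measure (EuclideanSpace ℝ (Fin d)))
    [IsFiniteMeasure ν] {S : Set (EuclideanSpace ℝ (Fin d))} {z₀ : EuclideanSpace ℝ (Fin d)}
    {ρ₀ : ℝ} (hρ₀ : 0 < ρ₀) (hS : S ⊆ ball z₀ ρ₀) {δ ρ ε : ℝ}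
    (hδ : 0 < δ) (hρ : 0 < ρ) (hε : 0 ≤ ε)
    (h : ∀ x ∈ S, (ν (closedBall x δ)).toReal ≤ ε * (ν (ball x ρ)).toReal) :
    ν S ≤ ENNReal.ofReal (ε * ((2 * ρ / δ + 1)^d * (ν univ).toReal)) := by
  classical
  obtain ⟨Y, hYS, hsep, hcov⟩ := exists_net hδ S
  have hfin : Y.Finite := finite_of_separated hd hδ hρ₀ z₀ (hYS.trans hS) hsep
  set F := hfin.toFinset with hF
  have hmem : ∀ y, y ∈ F ↔ y ∈ Y := fun y => hfin.mem_toFinset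
  have hsepF : ∀ y ∈ F, ∀ w ∈ F, y ≠ w → δ ≤ dist y w :=
    fun y hy w hw hyw => hsep y ((hmem y).1 hy) w ((hmem w).1 hw) hyw
  have hcov' : S ⊆ ⋃ y ∈ F, closedBall y δ := by
    intro x hx
    obtain ⟨y, hy, hxy⟩ := hcov x hx
    exact mem_biUnion ((hmem y).2 hy) (mem_closedBall.2 hxy.le)
  calc ν S ≤ ν (⋃ y ∈ F, closedBall y δ) := measure_mono hcov'
    _ ≤ ∑ y ∈ F, ν (closedBall y δ) := measure_biUnion_finset_le F _
    _ = ENNReal.ofReal (∑ y ∈ F, (ν (closedBall y δ)).toReal) := by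
        rw [ENNReal.ofReal_sum_of_nonneg (fun y _ => ENNReal.toReal_nonneg)]
        exact Finset.sum_congr rfl fun y _ => (ENNReal.ofReal_toReal (measure_ne_top ν _)).symm
    _ ≤ ENNReal.ofReal (ε * ((2 * ρ / δ + 1)^d * (ν univ).toReal)) := by
        apply ENNReal.ofReal_le_ofReal
        calc ∑ y ∈ F, (ν (closedBall y δ)).toReal
            ≤ ∑ y ∈ F, ε * (ν (ball y ρ)).toReal :=
              Finset.sum_le_sum fun y hy => h y (hYS ((hmem y).1 hy))
          _ = ε * ∑ y ∈ F, (ν (ball y ρ)).toReal := by rw [Finset.mul_sum]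
          _ ≤ ε * ((2 * ρ / δ + 1)^d * (ν univ).toReal) :=
              mul_le_mul_of_nonneg_left (sum_ball_le hd ν hδ hρ F hsepF) hε

/-- Dyadic level localization. -/
lemma exists_level {t : ℝ} (ht : 1 ≤ t) : ∃ m : ℕ, (2:ℝ)^m ≤ t ∧ t < 2^(m+1) := by
  classical
  have hex : ∃ n : ℕ, t < 2^n := pow_unbounded_of_one_lt t one_lt_two
  have hn₀ : t < 2 ^ (Nat.find hex) := Nat.find_spec hex
  have hne : Nat.find hex ≠ 0 := by
    intro h0
    rw [h0] at hn₀
    simp only [pow_zero] at hn₀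
    linarith
  obtain ⟨m, hm⟩ := Nat.exists_eq_succ_of_ne_zero hne
  refine ⟨m, ?_, by rw [← Nat.succ_eq_add_one, ← hm]; exact hn₀⟩
  have := Nat.find_min hex (m := m) (by omega)
  push_neg at this
  exact this

/-- The key numeric inequality at level `m`. -/
lemma num_ineq {η : ℝ} (hη : 0 < η) (d m : ℕ) :
    ((((2:ℝ)^m))^((d:ℝ)+η))⁻¹ * ((2:ℝ)^(m+3)+1)^d ≤ 16^d * (((2:ℝ)^η)⁻¹)^m := by
  have h2 : (0:ℝ) < 2 := by norm_num
  have hP : (0:ℝ) < 2^m := by positivity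
  have h1 : ((2:ℝ)^(m+3)+1)^d ≤ ((2:ℝ)^(m+4))^d := by
    apply pow_le_pow_left₀ (by positivity)
    have : (1:ℝ) ≤ 2^(m+3) := one_le_pow₀ one_le_two
    calc (2:ℝ)^(m+3)+1 ≤ 2^(m+3) + 2^(m+3) := by linarith
      _ = 2^(m+4) := by ring
  have h2' : (((2:ℝ)^m))^((d:ℝ)+η) = ((2:ℝ)^m)^d * ((2:ℝ)^η)^m := by
    rw [Real.rpow_add hP, Real.rpow_natCast]
    congr 1
    rw [← Real.rpow_natCast (2:ℝ) m, ← Real.rpow_mul (by norm_num), mul_comm,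
      Real.rpow_mul (by norm_num), Real.rpow_natCast]
  have h3 : ((2:ℝ)^(m+4))^d = ((2:ℝ)^m)^d * (16:ℝ)^d := by
    rw [← mul_pow]
    congr 1
    rw [pow_add]
    norm_num
  have hQm : (0:ℝ) < ((2:ℝ)^η)^m := by positivity
  rw [h2', mul_inv]
  calc (((2:ℝ)^m)^d)⁻¹ * (((2:ℝ)^η)^m)⁻¹ * ((2:ℝ)^(m+3)+1)^d
      ≤ (((2:ℝ)^m)^d)⁻¹ * (((2:ℝ)^η)^m)⁻¹ * (((2:ℝ)^m)^d * 16^d) := by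
        apply mul_le_mul_of_nonneg_left _ (by positivity)
        rw [← h3]
        exact h1
    _ = 16^d * (((2:ℝ)^η)⁻¹)^m := by
        rw [inv_pow]
        field_simp

/-- The measure of the set of points that are "bad at scale `ρ`" is `≲ C⁻¹`. -/
lemma bad_measure_le {d : ℕ} (hd : 0 < d) (ν : Measure (EuclideanSpace ℝ (Fin d)))
    [IsFiniteMeasure ν] {K : Set (EuclideanSpace ℝ (Fin d))} (hK : IsCompact K)
    (hKν : ν Kᶜ = 0) {η : ℝ} (hη : 0 < η) {C : ℝ} (hC : 1 ≤ C) {ρ : ℝ} (hρ : 0 < ρ) :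
    ν {x | ¬ ((∀ R : ℝ, 1 < R →
          (ν (ball x (R * ρ))).toReal ≤ C * R ^ ((d:ℝ) + η) * (ν (ball x ρ)).toReal) ∧
        (∀ R : ℝ, 1 < R →
          C⁻¹ * R ^ (-((d:ℝ) + η)) * (ν (ball x ρ)).toReal ≤ (ν (ball x (R⁻¹ * ρ))).toReal))}
      ≤ ENNReal.ofReal (C⁻¹ * (2 * ((16:ℝ)^d * ((1 - ((2:ℝ)^η)⁻¹)⁻¹ * (ν univ).toReal)))) := by
  classical
  have hC0 : (0:ℝ) < C := lt_of_lt_of_le one_pos hC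
  set α : ℝ := (d:ℝ) + η with hα_def
  have hα : 0 < α := by positivity
  set Vr : ℝ := (ν univ).toReal with hVr_def
  have hVr : 0 ≤ Vr := ENNReal.toReal_nonneg
  have h2η : 1 < (2:ℝ)^η :=
    (Real.one_lt_rpow_iff_of_pos (by norm_num)).2 (Or.inl ⟨one_lt_two, hη⟩)
  set Qq : ℝ := ((2:ℝ)^η)⁻¹ with hQq_def
  have hQ0 : 0 ≤ Qq := by rw [hQq_def]; positivity
  have hQ1 : Qq < 1 := by rw [hQq_def]; exact inv_lt_one_of_one_lt₀ h2η
  have hQgap : 0 < 1 - Qq := by linarith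
  -- localization to a bounded region
  obtain ⟨ρK, hρK, hKball⟩ := hK.isBounded.subset_ball_lt 0 0
  set ρ₀ : ℝ := ρK + ρ with hρ₀def
  have hρ₀ : 0 < ρ₀ := by rw [hρ₀def]; linarith
  have hloc : ∀ x, ν (ball x ρ) ≠ 0 → x ∈ ball (0 : EuclideanSpace ℝ (Fin d)) ρ₀ := by
    intro x hx
    have h2 : ν (ball x ρ \ K) = 0 := measure_mono_null (fun y hy => hy.2) hKν
    have h1 : ν (ball x ρ ∩ K) ≠ 0 := by
      intro h0
      apply hx
      have hle := measure_le_inter_add_diff ν (ball x ρ) K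
      rw [h0, h2, add_zero] at hle
      exact le_antisymm hle zero_le
    obtain ⟨y, hy1, hy2⟩ := nonempty_of_measure_ne_zero h1
    have hxy : dist x y < ρ := by rw [dist_comm]; exact mem_ball.1 hy1
    have hy0 : dist y 0 < ρK := mem_ball.1 (hKball hy2)
    have htri := dist_triangle x y (0 : EuclideanSpace ℝ (Fin d))
    exact mem_ball.2 (by rw [hρ₀def]; linarith)
  -- the dyadic bad sets
  set U : ℕ → Set (EuclideanSpace ℝ (Fin d)) := fun m =>
    {x | ν (ball x ρ) ≠ 0 ∧ ∃ s : ℝ, 2^m * ρ ≤ s ∧ s < 2^(m+1) * ρ ∧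
      C * ((2:ℝ)^m)^α * (ν (ball x ρ)).toReal < (ν (ball x s)).toReal} with hU_def
  set L : ℕ → Set (EuclideanSpace ℝ (Fin d)) := fun m =>
    {x | ∃ s : ℝ, ρ/2^(m+1) < s ∧ s ≤ ρ/2^m ∧
      (ν (ball x s)).toReal < C⁻¹ * (((2:ℝ)^m)^α)⁻¹ * (ν (ball x ρ)).toReal} with hL_def
  set S₀ : Set (EuclideanSpace ℝ (Fin d)) := {x | ν (ball x ρ) = 0} with hS₀def
  -- `S₀` is null
  have hS₀ : ν S₀ = 0 := by
    obtain ⟨D, hDc, hDd⟩ := TopologicalSpace.exists_countable_dense (EuclideanSpace ℝ (Fin d))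
    have hsub : S₀ ⊆ ⋃ p ∈ {p | p ∈ D ∧ ν (ball p (ρ/2)) = 0}, ball p (ρ/2) := by
      intro x hx
      obtain ⟨p, hp⟩ := (Metric.dense_iff.1 hDd) x (ρ/2) (by positivity)
      have hp1 : dist p x < ρ/2 := mem_ball.1 hp.1
      refine mem_biUnion ⟨hp.2, ?_⟩ ?_
      · refine measure_mono_null (fun y hy => mem_ball.2 ?_) hx
        have hyp : dist y p < ρ/2 := mem_ball.1 hy
        have := dist_triangle y p x
        linarith
      · exact mem_ball.2 (by rw [dist_comm]; linarith)
    refine measure_mono_null hsub ((measure_biUnion_null_iff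
      (hDc.mono (fun p hp => hp.1))).2 (fun p hp => hp.2))
  -- per-level estimates
  have hnum : ∀ m : ℕ, (((2:ℝ)^m)^α)⁻¹ * ((2:ℝ)^(m+3)+1)^d ≤ 16^d * Qq^m := by
    intro m
    rw [hQq_def, hα_def]
    exact num_ineq hη d m
  have hUm : ∀ m : ℕ, ν (U m) ≤ ENNReal.ofReal (C⁻¹ * (16^d * Vr) * Qq^m) := by
    intro m
    have hUsub : U m ⊆ ball (0 : EuclideanSpace ℝ (Fin d)) ρ₀ := fun x hx => hloc x hx.1
    have hhyp : ∀ x ∈ U m, (ν (closedBall x (ρ/2))).toReal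
        ≤ (C⁻¹ * (((2:ℝ)^m)^α)⁻¹) * (ν (ball x (2^(m+1) * ρ))).toReal := by
      intro x hx
      obtain ⟨hx0, s, hs1, hs2, hs3⟩ := hx
      have hcb : (ν (closedBall x (ρ/2))).toReal ≤ (ν (ball x ρ)).toReal :=
        ENNReal.toReal_mono (measure_ne_top ν _)
          (measure_mono (closedBall_subset_ball (by linarith)))
      have hmono : (ν (ball x s)).toReal ≤ (ν (ball x (2^(m+1) * ρ))).toReal :=
        ENNReal.toReal_mono (measure_ne_top ν _) (measure_mono (ball_subset_ball hs2.le))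
      have hpos : (0:ℝ) < C * ((2:ℝ)^m)^α := by positivity
      have hstep : (ν (ball x ρ)).toReal
          ≤ (C * ((2:ℝ)^m)^α)⁻¹ * (ν (ball x s)).toReal := by
        rw [inv_mul_eq_div, le_div_iff₀ hpos]
        calc (ν (ball x ρ)).toReal * (C * ((2:ℝ)^m)^α)
            = C * ((2:ℝ)^m)^α * (ν (ball x ρ)).toReal := by ring
          _ ≤ (ν (ball x s)).toReal := hs3.le
      calc (ν (closedBall x (ρ/2))).toReal ≤ (ν (ball x ρ)).toReal := hcb
        _ ≤ (C * ((2:ℝ)^m)^α)⁻¹ * (ν (ball x s)).toReal := hstep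
        _ ≤ (C * ((2:ℝ)^m)^α)⁻¹ * (ν (ball x (2^(m+1) * ρ))).toReal :=
            mul_le_mul_of_nonneg_left hmono (by positivity)
        _ = (C⁻¹ * (((2:ℝ)^m)^α)⁻¹) * (ν (ball x (2^(m+1) * ρ))).toReal := by
            rw [mul_inv]
    have happ := one_level hd ν hρ₀ hUsub (by positivity : (0:ℝ) < ρ/2)
      (by positivity : (0:ℝ) < 2^(m+1) * ρ) (by positivity) hhyp
    refine happ.trans (ENNReal.ofReal_le_ofReal ?_)
    have hsimp : 2*(2^(m+1)*ρ)/(ρ/2)+1 = (2:ℝ)^(m+3)+1 := by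
      field_simp
      ring
    rw [hsimp]
    calc (C⁻¹ * (((2:ℝ)^m)^α)⁻¹) * (((2:ℝ)^(m+3)+1)^d * Vr)
        = C⁻¹ * ((((2:ℝ)^m)^α)⁻¹ * ((2:ℝ)^(m+3)+1)^d) * Vr := by ring
      _ ≤ C⁻¹ * (16^d * Qq^m) * Vr := by
          apply mul_le_mul_of_nonneg_right
            (mul_le_mul_of_nonneg_left (hnum m) (by positivity)) hVr
      _ = C⁻¹ * (16^d * Vr) * Qq^m := by ring
  have hLm : ∀ m : ℕ, ν (L m) ≤ ENNReal.ofReal (C⁻¹ * (16^d * Vr) * Qq^m) := by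
    intro m
    have hLsub : L m ⊆ ball (0 : EuclideanSpace ℝ (Fin d)) ρ₀ := by
      intro x hx
      obtain ⟨s, hs1, hs2, hs3⟩ := hx
      apply hloc
      intro h0
      rw [h0] at hs3
      simp only [ENNReal.toReal_zero, mul_zero] at hs3
      exact absurd hs3 (not_lt.2 ENNReal.toReal_nonneg)
    have hhyp : ∀ x ∈ L m, (ν (closedBall x (ρ/2^(m+1)))).toReal
        ≤ (C⁻¹ * (((2:ℝ)^m)^α)⁻¹) * (ν (ball x ρ)).toReal := by
      intro x hx
      obtain ⟨s, hs1, hs2, hs3⟩ := hx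
      have hcb : (ν (closedBall x (ρ/2^(m+1)))).toReal ≤ (ν (ball x s)).toReal :=
        ENNReal.toReal_mono (measure_ne_top ν _) (measure_mono (closedBall_subset_ball hs1))
      exact hcb.trans hs3.le
    have happ := one_level hd ν hρ₀ hLsub (by positivity : (0:ℝ) < ρ/2^(m+1))
      hρ (by positivity) hhyp
    refine happ.trans (ENNReal.ofReal_le_ofReal ?_)
    have hsimp : 2*ρ/(ρ/2^(m+1))+1 = (2:ℝ)^(m+2)+1 := by
      field_simp
      ring
    rw [hsimp]
    have hmono23 : ((2:ℝ)^(m+2)+1)^d ≤ ((2:ℝ)^(m+3)+1)^d := by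
      apply pow_le_pow_left₀ (by positivity)
      have : (2:ℝ)^(m+2) ≤ 2^(m+3) := by
        apply pow_le_pow_right₀ one_le_two (by omega)
      linarith
    calc (C⁻¹ * (((2:ℝ)^m)^α)⁻¹) * (((2:ℝ)^(m+2)+1)^d * Vr)
        ≤ (C⁻¹ * (((2:ℝ)^m)^α)⁻¹) * (((2:ℝ)^(m+3)+1)^d * Vr) := by
          apply mul_le_mul_of_nonneg_left
            (mul_le_mul_of_nonneg_right hmono23 hVr) (by positivity)
      _ = C⁻¹ * ((((2:ℝ)^m)^α)⁻¹ * ((2:ℝ)^(m+3)+1)^d) * Vr := by ring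
      _ ≤ C⁻¹ * (16^d * Qq^m) * Vr := by
          apply mul_le_mul_of_nonneg_right
            (mul_le_mul_of_nonneg_left (hnum m) (by positivity)) hVr
      _ = C⁻¹ * (16^d * Vr) * Qq^m := by ring
  -- decomposition of the bad set
  have hdec : {x | ¬ ((∀ R : ℝ, 1 < R →
          (ν (ball x (R * ρ))).toReal ≤ C * R ^ α * (ν (ball x ρ)).toReal) ∧
        (∀ R : ℝ, 1 < R →
          C⁻¹ * R ^ (-α) * (ν (ball x ρ)).toReal ≤ (ν (ball x (R⁻¹ * ρ))).toReal))}
      ⊆ S₀ ∪ ((⋃ m, U m) ∪ (⋃ m, L m)) := by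
    intro x hx
    simp only [mem_setOf_eq, not_and_or] at hx
    by_cases hx0 : ν (ball x ρ) = 0
    · exact Or.inl hx0
    refine Or.inr ?_
    rcases hx with hA | hB
    · push_neg at hA
      obtain ⟨R, hR1, hRbad⟩ := hA
      left
      obtain ⟨m, hm1, hm2⟩ := exists_level hR1.le
      refine mem_iUnion.2 ⟨m, hx0, R * ρ, ?_, ?_, ?_⟩
      · exact mul_le_mul_of_nonneg_right hm1 hρ.le
      · exact mul_lt_mul_of_pos_right hm2 hρ
      · have hple : ((2:ℝ)^m)^α ≤ R^α :=
          Real.rpow_le_rpow (by positivity) hm1 hα.le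
        have : C * ((2:ℝ)^m)^α * (ν (ball x ρ)).toReal
            ≤ C * R^α * (ν (ball x ρ)).toReal := by
          apply mul_le_mul_of_nonneg_right _ ENNReal.toReal_nonneg
          exact mul_le_mul_of_nonneg_left hple hC0.le
        exact lt_of_le_of_lt this hRbad
    · push_neg at hB
      obtain ⟨R, hR1, hRbad⟩ := hB
      right
      have hR0 : (0:ℝ) < R := lt_trans one_pos hR1
      obtain ⟨m, hm1, hm2⟩ := exists_level hR1.le
      have hsval : R⁻¹ * ρ = ρ / R := by rw [inv_mul_eq_div]
      refine mem_iUnion.2 ⟨m, R⁻¹ * ρ, ?_, ?_, ?_⟩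
      · rw [hsval]
        exact div_lt_div_of_pos_left hρ hR0 hm2
      · rw [hsval]
        apply div_le_div_of_nonneg_left hρ.le (by positivity) hm1
      · have hple : R ^ (-α) ≤ (((2:ℝ)^m)^α)⁻¹ := by
          rw [Real.rpow_neg hR0.le]
          apply inv_anti₀ (by positivity)
          exact Real.rpow_le_rpow (by positivity) hm1 hα.le
        have : C⁻¹ * R ^ (-α) * (ν (ball x ρ)).toReal
            ≤ C⁻¹ * (((2:ℝ)^m)^α)⁻¹ * (ν (ball x ρ)).toReal := by
          apply mul_le_mul_of_nonneg_right _ ENNReal.toReal_nonneg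
          exact mul_le_mul_of_nonneg_left hple (by positivity)
        exact lt_of_lt_of_le hRbad this
  -- sum everything up
  have hgeo : ∀ (Us : ℕ → Set (EuclideanSpace ℝ (Fin d))),
      (∀ m, ν (Us m) ≤ ENNReal.ofReal (C⁻¹ * (16^d * Vr) * Qq^m)) →
      ν (⋃ m, Us m) ≤ ENNReal.ofReal (C⁻¹ * (16^d * Vr) * (1-Qq)⁻¹) := by
    intro Us hUs
    calc ν (⋃ m, Us m) ≤ ∑' m, ν (Us m) := measure_iUnion_le _
      _ ≤ ∑' m : ℕ, ENNReal.ofReal (C⁻¹ * (16^d * Vr) * Qq^m) := ENNReal.tsum_le_tsum hUs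
      _ = ENNReal.ofReal (∑' m : ℕ, C⁻¹ * (16^d * Vr) * Qq^m) :=
          (ENNReal.ofReal_tsum_of_nonneg (fun m => by positivity)
            ((summable_geometric_of_lt_one hQ0 hQ1).mul_left _)).symm
      _ = ENNReal.ofReal (C⁻¹ * (16^d * Vr) * (1-Qq)⁻¹) := by
          rw [tsum_mul_left, tsum_geometric_of_lt_one hQ0 hQ1]
  have hinv : (0:ℝ) ≤ (1-Qq)⁻¹ := inv_nonneg.2 hQgap.le
  calc ν {x | ¬ ((∀ R : ℝ, 1 < R →
          (ν (ball x (R * ρ))).toReal ≤ C * R ^ α * (ν (ball x ρ)).toReal) ∧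
        (∀ R : ℝ, 1 < R →
          C⁻¹ * R ^ (-α) * (ν (ball x ρ)).toReal ≤ (ν (ball x (R⁻¹ * ρ))).toReal))}
      ≤ ν (S₀ ∪ ((⋃ m, U m) ∪ (⋃ m, L m))) := measure_mono hdec
    _ ≤ ν S₀ + ν ((⋃ m, U m) ∪ (⋃ m, L m)) := measure_union_le _ _
    _ ≤ ν S₀ + (ν (⋃ m, U m) + ν (⋃ m, L m)) := add_le_add le_rfl (measure_union_le _ _)
    _ ≤ 0 + (ENNReal.ofReal (C⁻¹ * (16^d * Vr) * (1-Qq)⁻¹)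
          + ENNReal.ofReal (C⁻¹ * (16^d * Vr) * (1-Qq)⁻¹)) := by
        rw [hS₀]
        exact add_le_add le_rfl (add_le_add (hgeo U hUm) (hgeo L hLm))
    _ ≤ ENNReal.ofReal (C⁻¹ * (2 * ((16:ℝ)^d * ((1 - Qq)⁻¹ * Vr)))) := by
        rw [zero_add, ← ENNReal.ofReal_add
          (mul_nonneg (mul_nonneg (inv_nonneg.2 hC0.le)
            (mul_nonneg (by positivity) hVr)) hinv)
          (mul_nonneg (mul_nonneg (inv_nonneg.2 hC0.le)
            (mul_nonneg (by positivity) hVr)) hinv)]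
        exact ENNReal.ofReal_le_ofReal (le_of_eq (by ring))

end TempAux

open TempAux in
/-- Temperance of blow-ups (Proposition "Preiss" of the paper): for a compactly supported
finite measure `ν`, a sequence `r_j → 0` and `η > 0`, for `ν`-a.e. `x₀` there is a
subsequence along which the mass ratios `ν(B(x₀, R r))/ν(B(x₀,r))` are bounded above by
`C R^{d+η}` and below by `c R^{-(d+η)}` (for the radius `R⁻¹ r`), uniformly, for all `R > 1`. -/
theorem temperance_of_blowups
    (d : ℕ) (ν : Measure (EuclideanSpace ℝ (Fin d))) [IsFiniteMeasure ν]
    (hsupp : ∃ K : Set (EuclideanSpace ℝ (Fin d)), IsCompact K ∧ ν Kᶜ = 0)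
    (r : ℕ → ℝ) (hrpos : ∀ j, 0 < r j) (hrlim : Tendsto r atTop (nhds 0))
    (η : ℝ) (hη : 0 < η) :
    ∀ᵐ x₀ ∂ν, ∃ φ : ℕ → ℕ, StrictMono φ ∧ ∃ C > (0:ℝ), ∃ c > (0:ℝ),
      ∀ k : ℕ, ∀ R : ℝ, 1 < R →
        (ν (ball x₀ (R * r (φ k)))).toReal
            ≤ C * R ^ ((d:ℝ) + η) * (ν (ball x₀ (r (φ k)))).toReal ∧
        c * R ^ (-((d:ℝ) + η)) * (ν (ball x₀ (r (φ k)))).toReal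
            ≤ (ν (ball x₀ (R⁻¹ * r (φ k)))).toReal := by
  classical
  obtain ⟨K, hK, hKν⟩ := hsupp
  rcases Nat.eq_zero_or_pos d with hd0 | hd
  · -- degenerate case `d = 0` : the space is a single point
    subst hd0
    refine ae_of_all _ fun x₀ => ⟨id, strictMono_id, 1, one_pos, 1, one_pos, ?_⟩
    intro k R hR
    simp only [id_eq]
    have hR0 : (0:ℝ) < R := lt_trans one_pos hR
    have hball : ∀ s : ℝ, 0 < s → ball x₀ s = univ := by
      intro s hs
      apply eq_univ_of_forall
      intro y
      have hyx : y = x₀ := Subsingleton.elim y x₀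
      rw [mem_ball, hyx, dist_self]
      exact hs
    have hexp : (0:ℝ) < ((0:ℕ):ℝ) + η := by simpa using hη
    constructor
    · rw [hball _ (mul_pos hR0 (hrpos k)), hball _ (hrpos k)]
      have h1 : (1:ℝ) ≤ R ^ (((0:ℕ):ℝ) + η) := Real.one_le_rpow hR.le hexp.le
      nlinarith [ENNReal.toReal_nonneg (a := ν univ)]
    · rw [hball _ (mul_pos (inv_pos.2 hR0) (hrpos k)), hball _ (hrpos k)]
      have h1 : R ^ (-(((0:ℕ):ℝ) + η)) ≤ 1 :=
        Real.rpow_le_one_of_one_le_of_nonpos hR.le (by linarith)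
      nlinarith [ENNReal.toReal_nonneg (a := ν univ)]
  · -- main case
    set Gd : ℝ → ℝ → EuclideanSpace ℝ (Fin d) → Prop := fun C ρ x =>
      (∀ R : ℝ, 1 < R →
          (ν (ball x (R * ρ))).toReal ≤ C * R ^ ((d:ℝ) + η) * (ν (ball x ρ)).toReal) ∧
      (∀ R : ℝ, 1 < R →
          C⁻¹ * R ^ (-((d:ℝ) + η)) * (ν (ball x ρ)).toReal ≤ (ν (ball x (R⁻¹ * ρ))).toReal)
      with hGd_def
    set K₀ : ℝ := 2 * ((16:ℝ)^d * ((1 - ((2:ℝ)^η)⁻¹)⁻¹ * (ν univ).toReal)) with hK₀def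
    have h2η : 1 < (2:ℝ)^η :=
      (Real.one_lt_rpow_iff_of_pos (by norm_num)).2 (Or.inl ⟨one_lt_two, hη⟩)
    have hQgap : 0 < 1 - ((2:ℝ)^η)⁻¹ := by
      have := inv_lt_one_of_one_lt₀ h2η
      linarith
    have hK₀0 : 0 ≤ K₀ := by
      rw [hK₀def]
      have h1 : (0:ℝ) ≤ (1 - ((2:ℝ)^η)⁻¹)⁻¹ := inv_nonneg.2 hQgap.le
      have h2 : (0:ℝ) ≤ (ν univ).toReal := ENNReal.toReal_nonneg
      positivity
    set Bad : Set (EuclideanSpace ℝ (Fin d)) :=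
      ⋂ (n : ℕ), ⋃ (N : ℕ), ⋂ (j : ℕ), ⋂ (_ : N ≤ j), {x | ¬ Gd ((n:ℝ)+1) (r j) x}
      with hBad_def
    have hkey : ∀ n : ℕ, ∀ j : ℕ,
        ν {x | ¬ Gd ((n:ℝ)+1) (r j) x} ≤ ENNReal.ofReal (((n:ℝ)+1)⁻¹ * K₀) := by
      intro n j
      have := bad_measure_le hd ν hK hKν hη
        (C := (n:ℝ)+1) (by exact_mod_cast Nat.one_le_iff_ne_zero.2 (by simp) ) (hrpos j)
      exact this
    have hBadC : ∀ n : ℕ, ν Bad ≤ ENNReal.ofReal (((n:ℝ)+1)⁻¹ * K₀) := by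
      intro n
      have h1 : ν Bad ≤ ν (⋃ (N : ℕ), ⋂ (j : ℕ), ⋂ (_ : N ≤ j),
          {x | ¬ Gd ((n:ℝ)+1) (r j) x}) := measure_mono (iInter_subset _ n)
      have hmono : Monotone (fun N : ℕ => ⋂ (j : ℕ), ⋂ (_ : N ≤ j),
          {x | ¬ Gd ((n:ℝ)+1) (r j) x}) := by
        intro N N' hNN'
        apply iInter_mono
        intro j
        intro x hx
        simp only [mem_iInter] at hx ⊢
        intro hj
        exact hx (le_trans hNN' hj)
      rw [Directed.measure_iUnion hmono.directed_le] at h1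
      refine h1.trans (iSup_le fun N => ?_)
      refine le_trans (measure_mono ?_) (hkey n N)
      intro x hx
      simp only [mem_iInter] at hx
      exact hx N le_rfl
    have hBad0 : ν Bad = 0 := by
      refine le_antisymm ?_ zero_le
      refine ENNReal.le_of_forall_pos_le_add fun ε hε _ => ?_
      rw [zero_add]
      obtain ⟨n, hn⟩ := exists_nat_gt (K₀ / (ε : ℝ))
      refine (hBadC n).trans ?_
      have hε0 : (0:ℝ) < (ε : ℝ) := hε
      have hle : ((n:ℝ)+1)⁻¹ * K₀ ≤ (ε : ℝ) := by
        rw [inv_mul_le_iff₀ (by positivity)]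
        have : K₀ / (ε : ℝ) < (n:ℝ) + 1 := lt_trans hn (by linarith)
        rw [div_lt_iff₀ hε0] at this
        nlinarith
      calc ENNReal.ofReal (((n:ℝ)+1)⁻¹ * K₀) ≤ ENNReal.ofReal (ε : ℝ) :=
            ENNReal.ofReal_le_ofReal hle
        _ = (ε : ENNReal) := ENNReal.ofReal_coe_nnreal
    have hae := measure_eq_zero_iff_ae_notMem.1 hBad0
    filter_upwards [hae] with x hx
    rw [hBad_def] at hx
    simp only [mem_iInter, mem_iUnion, mem_setOf_eq] at hx
    push_neg at hx
    obtain ⟨n, hn⟩ := hx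
    have hfreq : ∀ N : ℕ, ∃ j ≥ N, Gd ((n:ℝ)+1) (r j) x := by
      intro N
      obtain ⟨j, hj1, hj2⟩ := hn N
      exact ⟨j, hj1, hj2⟩
    obtain ⟨φ, hφ, hgood⟩ := Filter.extraction_of_frequently_atTop (frequently_atTop.2 hfreq)
    refine ⟨φ, hφ, (n:ℝ)+1, by positivity, ((n:ℝ)+1)⁻¹, by positivity, ?_⟩
    intro k R hR
    exact ⟨(hgood k).1 R hR, (hgood k).2 R hR⟩
end
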